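/- arXiv:2403.18984 — 2 statements merged into one kernel-verified Lean document; each statement's English description precedes it below -/
import Mathlib

section
/- Let (X, d) be a metric space and fix constants d_H > 0, d_W ≥ 2, s ∈ (0, 1), and c₁, c₂, c₃, c₄ > 0. Suppose p : (0, ∞) × X × X → ℝ satisfies, for all t > 0 and all x, y ∈ X, the two-sided sub-Gaussian bound c₁·t^{−d_H/d_W}·exp(−c₂·(d(x, y)^{d_W}/t)^{1/(d_W−1)}) ≤ p(t, x, y) ≤ c₃·t^{−d_H/d_W}·exp(−c₄·(d(x, y)^{d_W}/t)^{1/(d_W−1)}). Then there exist constants 0 < c ≤ C, depending only on d_H, d_W, s, c₁, c₂, c₃, c₄, such that for all x, y ∈ X with d(x, y) > 0, c·d(x, y)^{−(d_H + s·d_W)} ≤ ∫₀^∞ p(t, x, y)·t^{−1−s} dt ≤ C·d(x, y)^{−(d_H + s·d_W)}. In particular the jump kernel K(x, y) = ∫₀^∞ p(t, x, y)·t^{−1−s} dt is finite for x ≠ y and comparable to d(x, y)^{−(d_H + s·d_W)}. -/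
open MeasureTheory Metric

open Set Real in
/-- Integrability of `u ^ β * exp (-a * u ^ (-γ))` on `(0,∞)`:
decay at infinity from `β`, decay at `0` from the exponential. -/
lemma jk_aux_integrable (β γ a : ℝ) (hγ : 0 < γ) (ha : 0 < a)
    (he : -1 < -1/γ - 1 + (-1/γ) * β) :
    IntegrableOn (fun u : ℝ => u ^ β * Real.exp (-a * u ^ (-γ))) (Set.Ioi (0:ℝ)) := by
  set q : ℝ := -1/γ with hqdef
  have hq : q < 0 := div_neg_of_neg_of_pos (by norm_num) hγ
  have hq0 : q ≠ 0 := ne_of_lt hq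
  rw [← integrableOn_Ioi_comp_rpow_iff' (fun u : ℝ => u ^ β * Real.exp (-a * u ^ (-γ))) hq0]
  have hEq : EqOn (fun x : ℝ => x ^ (q - 1) • ((x ^ q) ^ β * Real.exp (-a * (x ^ q) ^ (-γ))))
      (fun x : ℝ => x ^ (q - 1 + q * β) * Real.exp (-a * x)) (Set.Ioi 0) := by
    intro x hx
    have hx0 : (0:ℝ) < x := hx
    have h1 : (x ^ q) ^ β = x ^ (q * β) := (Real.rpow_mul hx0.le q β).symm
    have h2 : (x ^ q) ^ (-γ) = x := by
      rw [← Real.rpow_mul hx0.le]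
      have : q * (-γ) = 1 := by rw [hqdef, div_mul_eq_mul_div, neg_one_mul, neg_neg, div_self hγ.ne']
      rw [this, Real.rpow_one]
    simp only [smul_eq_mul, h1, h2, ← mul_assoc, ← Real.rpow_add hx0]
  rw [integrableOn_congr_fun hEq measurableSet_Ioi]
  have := integrableOn_rpow_mul_exp_neg_mul_rpow (p := 1) (s := q - 1 + q * β) (b := a)
    (by simpa [hqdef] using he) one_pos ha
  simpa [Real.rpow_one] using this

/-- if a heat kernel `p` satisfies two-sided sub-Gaussian bounds with
Hausdorff dimension `d_H` and walk dimension `d_W`, then for `s ∈ (0,1)` the jump kernel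
`K(x,y) = ∫₀^∞ p(t,x,y)·t^{-1-s} dt` is finite for `x ≠ y` and comparable to
`d(x,y)^{-(d_H + s·d_W)}`. -/
theorem jump_kernel_comparable
    {X : Type*} [MetricSpace X]
    (d_H d_W s c₁ c₂ c₃ c₄ : ℝ)
    (hdH : 0 < d_H) (hdW : 2 ≤ d_W) (hs₀ : 0 < s) (hs₁ : s < 1)
    (hc₁ : 0 < c₁) (hc₂ : 0 < c₂) (hc₃ : 0 < c₃) (hc₄ : 0 < c₄)
    (p : ℝ → X → X → ℝ)
    (hmeas : ∀ x y : X, Measurable fun t => p t x y)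
    (hlow : ∀ (t : ℝ) (x y : X), 0 < t →
      c₁ * t ^ (-(d_H / d_W)) *
          Real.exp (-c₂ * ((dist x y ^ d_W / t) ^ (1 / (d_W - 1)))) ≤ p t x y)
    (hup : ∀ (t : ℝ) (x y : X), 0 < t →
      p t x y ≤ c₃ * t ^ (-(d_H / d_W)) *
          Real.exp (-c₄ * ((dist x y ^ d_W / t) ^ (1 / (d_W - 1))))) :
    ∃ c C : ℝ, 0 < c ∧ c ≤ C ∧
      ∀ x y : X, 0 < dist x y →
        IntegrableOn (fun t => p t x y * t ^ (-(1 + s))) (Set.Ioi (0 : ℝ)) ∧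
        c * dist x y ^ (-(d_H + s * d_W)) ≤
          ∫ t in Set.Ioi (0 : ℝ), p t x y * t ^ (-(1 + s)) ∧
        (∫ t in Set.Ioi (0 : ℝ), p t x y * t ^ (-(1 + s))) ≤
          C * dist x y ^ (-(d_H + s * d_W)) := by
  have hdW0 : (0:ℝ) < d_W := by linarith
  have hdW1 : (0:ℝ) < d_W - 1 := by linarith
  set γ : ℝ := 1 / (d_W - 1) with hγdef
  have hγ : 0 < γ := by positivity
  set β : ℝ := -(d_H / d_W) - (1 + s) with hβdef
  set g : ℝ → ℝ → ℝ := fun a u => u ^ β * Real.exp (-a * u ^ (-γ)) with hgdef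
  -- integrability of g a
  have hgint : ∀ a : ℝ, 0 < a → IntegrableOn (g a) (Set.Ioi (0:ℝ)) := by
    intro a ha
    apply jk_aux_integrable β γ a hγ ha
    have h1 : -1/γ = -(d_W - 1) := by
      rw [hγdef]; field_simp
    rw [h1, hβdef]
    have hpos : 0 < (d_W - 1) * (d_H / d_W + s) :=
      mul_pos hdW1 (add_pos (div_pos hdH hdW0) hs₀)
    nlinarith [hpos]
  -- positivity of the integral of g a
  have hgpos : ∀ a : ℝ, 0 < a → 0 < ∫ u in Set.Ioi (0:ℝ), g a u := by
    intro a ha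
    rw [setIntegral_pos_iff_support_of_nonneg_ae ?_ (hgint a ha)]
    · refine lt_of_lt_of_le ?_ (measure_mono
        (show Set.Ioi (0:ℝ) ⊆ Function.support (g a) ∩ Set.Ioi 0 from ?_))
      · rw [Real.volume_Ioi]; exact ENNReal.zero_lt_top
      · intro u hu
        have hu0 : (0:ℝ) < u := hu
        refine ⟨?_, hu⟩
        have : 0 < g a u := by
          simp only [hgdef]
          positivity
        exact ne_of_gt this
    · filter_upwards [ae_restrict_mem measurableSet_Ioi] with u hu
      have hu0 : (0:ℝ) < u := hu
      simp only [Pi.zero_apply, hgdef]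
      positivity
  -- scaling identity
  have hscale : ∀ a r : ℝ, 0 < a → 0 < r →
      IntegrableOn (fun t => t ^ (-(d_H / d_W)) *
        Real.exp (-a * ((r ^ d_W / t) ^ γ)) * t ^ (-(1 + s))) (Set.Ioi (0:ℝ)) ∧
      (∫ t in Set.Ioi (0:ℝ), t ^ (-(d_H / d_W)) *
          Real.exp (-a * ((r ^ d_W / t) ^ γ)) * t ^ (-(1 + s)))
        = r ^ (-(d_H + s * d_W)) * ∫ u in Set.Ioi (0:ℝ), g a u := by
    intro a r ha hr
    set R : ℝ := r ^ d_W with hRdef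
    have hR : 0 < R := Real.rpow_pos_of_pos hr d_W
    have hRβ : 0 < R ^ β := Real.rpow_pos_of_pos hR β
    have key : Set.EqOn (fun t : ℝ => t ^ (-(d_H / d_W)) *
        Real.exp (-a * ((R / t) ^ γ)) * t ^ (-(1 + s)))
        (fun t : ℝ => R ^ β * g a (t * R⁻¹)) (Set.Ioi 0) := by
      intro t ht
      have ht0 : (0:ℝ) < t := ht
      have htR : (0:ℝ) < t * R⁻¹ := by positivity
      have h1 : (t * R⁻¹) ^ β = t ^ β * (R ^ β)⁻¹ := by
        rw [Real.mul_rpow ht0.le (inv_nonneg.2 hR.le), Real.inv_rpow hR.le]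
      have h2 : (t * R⁻¹) ^ (-γ) = (R / t) ^ γ := by
        rw [Real.rpow_neg htR.le, ← Real.inv_rpow htR.le]
        congr 1
        field_simp
      have h3 : t ^ (-(d_H / d_W)) * t ^ (-(1 + s)) = t ^ β := by
        rw [← Real.rpow_add ht0]
        congr 1
        all_goals rw [hβdef]; ring
      simp only [hgdef, h1, h2]
      rw [← h3]
      field_simp
    have hint2 : IntegrableOn (fun t : ℝ => R ^ β * g a (t * R⁻¹)) (Set.Ioi (0:ℝ)) := by
      apply Integrable.const_mul
      have := (integrableOn_Ioi_comp_mul_right_iff (g a) 0 (inv_pos.2 hR)).mpr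
      simp only [zero_mul] at this
      exact this (hgint a ha)
    constructor
    · exact (integrableOn_congr_fun key measurableSet_Ioi).mpr hint2
    · rw [setIntegral_congr_fun measurableSet_Ioi key, integral_const_mul]
      rw [integral_comp_mul_right_Ioi (g a) 0 (inv_pos.2 hR)]
      simp only [zero_mul, inv_inv, smul_eq_mul]
      have hRpow : R ^ β * R = r ^ (-(d_H + s * d_W)) := by
        rw [hRdef, ← Real.rpow_mul hr.le, ← Real.rpow_add hr]
        congr 1
        rw [hβdef]; field_simp; ring
      rw [← mul_assoc, hRpow]
  -- choose the constants
  refine ⟨c₁ * ∫ u in Set.Ioi (0:ℝ), g c₂ u,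
    max (c₃ * ∫ u in Set.Ioi (0:ℝ), g c₄ u) (c₁ * ∫ u in Set.Ioi (0:ℝ), g c₂ u),
    mul_pos hc₁ (hgpos c₂ hc₂), le_max_right _ _, ?_⟩
  intro x y hr
  set r : ℝ := dist x y with hrdef
  have hrpow : 0 < r ^ (-(d_H + s * d_W)) := Real.rpow_pos_of_pos hr _
  -- lower and upper envelopes
  set fl : ℝ → ℝ := fun t => t ^ (-(d_H / d_W)) *
    Real.exp (-c₂ * ((r ^ d_W / t) ^ γ)) * t ^ (-(1 + s)) with hfldef
  set fu : ℝ → ℝ := fun t => t ^ (-(d_H / d_W)) *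
    Real.exp (-c₄ * ((r ^ d_W / t) ^ γ)) * t ^ (-(1 + s)) with hfudef
  obtain ⟨hflint, hflval⟩ := hscale c₂ r hc₂ hr
  obtain ⟨hfuint, hfuval⟩ := hscale c₄ r hc₄ hr
  have hlow' : ∀ t ∈ Set.Ioi (0:ℝ), c₁ * fl t ≤ p t x y * t ^ (-(1 + s)) := by
    intro t ht
    have ht0 : (0:ℝ) < t := ht
    have := mul_le_mul_of_nonneg_right (hlow t x y ht0)
      (Real.rpow_nonneg ht0.le (-(1 + s)))
    calc c₁ * fl t = c₁ * t ^ (-(d_H / d_W)) *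
        Real.exp (-c₂ * ((r ^ d_W / t) ^ γ)) * t ^ (-(1 + s)) := by
          simp only [hfldef]; ring
      _ ≤ p t x y * t ^ (-(1 + s)) := by
          simpa only [hγdef, hrdef] using this
  have hup' : ∀ t ∈ Set.Ioi (0:ℝ), p t x y * t ^ (-(1 + s)) ≤ c₃ * fu t := by
    intro t ht
    have ht0 : (0:ℝ) < t := ht
    have := mul_le_mul_of_nonneg_right (hup t x y ht0)
      (Real.rpow_nonneg ht0.le (-(1 + s)))
    calc p t x y * t ^ (-(1 + s))
        ≤ c₃ * t ^ (-(d_H / d_W)) *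
          Real.exp (-c₄ * ((r ^ d_W / t) ^ γ)) * t ^ (-(1 + s)) := by
          simpa only [hγdef, hrdef] using this
      _ = c₃ * fu t := by simp only [hfudef]; ring
  have hnonneg : ∀ t ∈ Set.Ioi (0:ℝ), 0 ≤ p t x y * t ^ (-(1 + s)) := by
    intro t ht
    have ht0 : (0:ℝ) < t := ht
    refine le_trans ?_ (hlow' t ht)
    have : 0 < fl t := by
      have : 0 < t := ht0
      simp only [hfldef]
      positivity
    positivity
  -- integrability of the main integrand
  have hintp : IntegrableOn (fun t => p t x y * t ^ (-(1 + s))) (Set.Ioi (0:ℝ)) := by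
    apply Integrable.mono' (hfuint.const_mul c₃)
    · apply AEStronglyMeasurable.mul
      · exact (hmeas x y).aestronglyMeasurable
      · refine ContinuousOn.aestronglyMeasurable ?_ measurableSet_Ioi
        exact fun t ht => (Real.continuousAt_rpow_const t _
          (Or.inl (ne_of_gt ht))).continuousWithinAt
    · rw [ae_restrict_iff' measurableSet_Ioi]
      filter_upwards with t ht
      rw [Real.norm_eq_abs, abs_of_nonneg (hnonneg t ht)]
      exact hup' t ht
  refine ⟨hintp, ?_, ?_⟩
  · have h1 : (∫ t in Set.Ioi (0:ℝ), c₁ * fl t) ≤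
        ∫ t in Set.Ioi (0:ℝ), p t x y * t ^ (-(1 + s)) :=
      setIntegral_mono_on (hflint.const_mul c₁) hintp measurableSet_Ioi hlow'
    rw [integral_const_mul, hflval] at h1
    calc c₁ * (∫ u in Set.Ioi (0:ℝ), g c₂ u) * r ^ (-(d_H + s * d_W))
        = c₁ * (r ^ (-(d_H + s * d_W)) * ∫ u in Set.Ioi (0:ℝ), g c₂ u) := by ring
      _ ≤ _ := h1
  · have h1 : (∫ t in Set.Ioi (0:ℝ), p t x y * t ^ (-(1 + s))) ≤
        ∫ t in Set.Ioi (0:ℝ), c₃ * fu t :=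
      setIntegral_mono_on hintp (hfuint.const_mul c₃) measurableSet_Ioi hup'
    rw [integral_const_mul, hfuval] at h1
    refine h1.trans ?_
    calc c₃ * (r ^ (-(d_H + s * d_W)) * ∫ u in Set.Ioi (0:ℝ), g c₄ u)
        = (c₃ * ∫ u in Set.Ioi (0:ℝ), g c₄ u) * r ^ (-(d_H + s * d_W)) := by ring
      _ ≤ _ := mul_le_mul_of_nonneg_right (le_max_left _ _) hrpow.le
end

section
/- (The half-space is a uniform domain in the extended space.) Let (X, d) be a geodesic metric space, i.e. for every pair x, x′ ∈ X there is an isometric embedding γ : [0, d(x, x′)] → X with γ(0) = x and γ(d(x, x′)) = x′. Equip X × ℝ with the metric d_a((x, y), (x′, y′)) = (d(x, x′)² + (y − y′)²)^{1/2}. Then the open upper half-space Ω = X × (0, ∞) is a uniform domain in (X × ℝ, d_a): there exist absolute constants c ∈ (0, 1) and C > 1 (independent of X) such that for any two points z, w ∈ Ω there is a continuous rectifiable curve γ : [0, 1] → Ω with γ(0) = z, γ(1) = w, whose length satisfies length(γ) ≤ C·d_a(z, w), and such that for every t ∈ [0, 1], dist_{d_a}(γ(t), (X × ℝ) ∖ Ω)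 ≥ c·min(d_a(z, γ(t)), d_a(γ(t), w)). -/
open Metric

/-- The extended metric `d_a((x,y),(x',y')) = (d(x,x')² + (y-y')²)^{1/2}` on `X × ℝ`. -/
noncomputable def da {X : Type*} [MetricSpace X] (z w : X × ℝ) : ℝ :=
  Real.sqrt (dist z.1 w.1 ^ 2 + (z.2 - w.2) ^ 2)

/-- The length of the curve `γ : [0,1] → X × ℝ` with respect to `d_a`: the supremum over
all partitions `0 = t₀ ≤ t₁ ≤ ⋯ ≤ tₙ = 1` of `Σᵢ d_a(γ(t_{i-1}), γ(tᵢ))`. -/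
noncomputable def daLength {X : Type*} [MetricSpace X] (γ : ℝ → X × ℝ) : ENNReal :=
  ⨆ (n : ℕ) (t : Fin (n + 1) → ℝ) (_ : Monotone t) (_ : t 0 = 0)
    (_ : t (Fin.last n) = 1),
    ENNReal.ofReal (∑ i : Fin n, da (γ (t i.castSucc)) (γ (t i.succ)))

/-- The `d_a`-distance from a point `z` to a set `S` in `X × ℝ`. -/
noncomputable def daDist {X : Type*} [MetricSpace X] (z : X × ℝ) (S : Set (X × ℝ)) : ℝ :=
  sInf ((fun w => da z w) '' S)

section Aux
variable {X : Type*} [MetricSpace X]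

lemma da_nonneg (p q : X × ℝ) : 0 ≤ da p q := Real.sqrt_nonneg _

lemma da_vert (a : X) (b c : ℝ) : da (a, b) (a, c) = |b - c| := by
  simp [da, Real.sqrt_sq_eq_abs]

lemma da_horiz (a a' : X) (b : ℝ) : da (a, b) (a', b) = dist a a' := by
  simp [da, Real.sqrt_sq dist_nonneg]

lemma da_comm (p q : X × ℝ) : da p q = da q p := by
  unfold da; rw [dist_comm, show (p.2 - q.2)^2 = (q.2 - p.2)^2 by ring]

lemma da_fst_le (p q : X × ℝ) : dist p.1 q.1 ≤ da p q := by
  rw [← Real.sqrt_sq (dist_nonneg (x := p.1) (y := q.1))]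
  exact Real.sqrt_le_sqrt (by nlinarith [sq_nonneg (p.2 - q.2)])

lemma da_snd_le (p q : X × ℝ) : |p.2 - q.2| ≤ da p q := by
  rw [← Real.sqrt_sq_eq_abs]
  exact Real.sqrt_le_sqrt (by nlinarith [sq_nonneg (dist p.1 q.1)])

lemma sqrt_sq_add_sq_eq (a b : ℝ) : Real.sqrt (a^2 + b^2) = ‖(⟨a, b⟩ : ℂ)‖ := by
  rw [Complex.norm_def, Complex.normSq_mk]; ring_nf

lemma da_triangle (p q r : X × ℝ) : da p r ≤ da p q + da q r := by
  have h1 : da p r ≤ Real.sqrt ((dist p.1 q.1 + dist q.1 r.1)^2 + ((p.2 - q.2) + (q.2 - r.2))^2) := by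
    apply Real.sqrt_le_sqrt
    have ht := dist_triangle p.1 q.1 r.1
    have h0 : dist p.1 r.1 ^ 2 ≤ (dist p.1 q.1 + dist q.1 r.1)^2 := by
      nlinarith [dist_nonneg (x := p.1) (y := r.1)]
    have : (p.2 - r.2) = (p.2 - q.2) + (q.2 - r.2) := by ring
    rw [this]; linarith
  refine h1.trans ?_
  unfold da
  rw [sqrt_sq_add_sq_eq, sqrt_sq_add_sq_eq, sqrt_sq_add_sq_eq]
  have : (⟨dist p.1 q.1 + dist q.1 r.1, (p.2 - q.2) + (q.2 - r.2)⟩ : ℂ)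
      = (⟨dist p.1 q.1, p.2 - q.2⟩ : ℂ) + (⟨dist q.1 r.1, q.2 - r.2⟩ : ℂ) := by
    apply Complex.ext <;> simp
  rw [this]
  exact norm_add_le _ _

lemma dist_le_da (p q : X × ℝ) : dist p q ≤ da p q := by
  rw [Prod.dist_eq]
  refine max_le (da_fst_le p q) ?_
  rw [Real.dist_eq]; exact da_snd_le p q

lemma fin_telescope {n : ℕ} (t : Fin (n+1) → ℝ) :
    ∑ i : Fin n, (t i.succ - t i.castSucc) = t (Fin.last n) - t 0 := by
  induction n with
  | zero => simp [Fin.last]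
  | succ n ih =>
    rw [Fin.sum_univ_castSucc]
    have h := ih (fun i => t i.castSucc)
    simp only [Fin.succ_castSucc] at h ⊢
    rw [show ∑ i : Fin n, (t (i.succ).castSucc - t i.castSucc.castSucc)
        = (fun i : Fin (n+1) => t i.castSucc) (Fin.last n) - (fun i : Fin (n+1) => t i.castSucc) 0 from h]
    simp [Fin.succ_last]

lemma daLength_le_of_lip (γ : ℝ → X × ℝ) (K : ℝ)
    (h : ∀ s ∈ Set.Icc (0:ℝ) 1, ∀ t ∈ Set.Icc (0:ℝ) 1, s ≤ t → da (γ s) (γ t) ≤ K * (t - s)) :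
    daLength γ ≤ ENNReal.ofReal K := by
  refine iSup_le fun n => iSup_le fun t => iSup_le fun hmono => iSup_le fun h0 => iSup_le fun h1 => ?_
  apply ENNReal.ofReal_le_ofReal
  have hmem : ∀ i : Fin (n+1), t i ∈ Set.Icc (0:ℝ) 1 := fun i =>
    ⟨h0 ▸ hmono (Fin.zero_le i), h1 ▸ hmono (Fin.le_last i)⟩
  calc ∑ i : Fin n, da (γ (t i.castSucc)) (γ (t i.succ))
      ≤ ∑ i : Fin n, K * (t i.succ - t i.castSucc) :=
        Finset.sum_le_sum fun i _ => h _ (hmem _) _ (hmem _) (hmono (Fin.castSucc_lt_succ (i := i)).le)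
    _ = K * ∑ i : Fin n, (t i.succ - t i.castSucc) := by rw [Finset.mul_sum]
    _ = K * (1 - 0) := by rw [fin_telescope, h0, h1]
    _ = K := by ring

lemma daDist_lower (q : X × ℝ) (x0 : X) :
    q.2 ≤ daDist q {p : X × ℝ | p.2 ≤ 0} := by
  apply le_csInf
  · exact ⟨da q (x0, 0), (x0, 0), by simp, rfl⟩
  · rintro b ⟨p, hp, rfl⟩
    have hp2 : p.2 ≤ 0 := hp
    have h1 : q.2 ≤ |q.2 - p.2| := le_trans (by linarith) (le_abs_self _)
    exact h1.trans (da_snd_le q p)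

end Aux


set_option maxHeartbeats 1600000 in
/-- The half-space is a uniform domain in the extended space: there exist
absolute constants `c ∈ (0,1)` and `C > 1` such that, for every geodesic metric space
`X`, any two points of the open upper half-space `Ω = X × (0,∞)` of `(X × ℝ, d_a)` can
be joined by a continuous rectifiable curve `γ : [0,1] → Ω` with
`length(γ) ≤ C·d_a(z,w)` and `dist_{d_a}(γ(t), Ωᶜ) ≥ c·min(d_a(z,γ(t)), d_a(γ(t),w))`. -/
theorem halfspace_uniform_domain :
    ∃ c C : ℝ, 0 < c ∧ c < 1 ∧ 1 < C ∧
      ∀ (X : Type*) [MetricSpace X],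
        (∀ x x' : X, ∃ g : ℝ → X, g 0 = x ∧ g (dist x x') = x' ∧
          ∀ s ∈ Set.Icc (0 : ℝ) (dist x x'), ∀ t ∈ Set.Icc (0 : ℝ) (dist x x'),
            dist (g s) (g t) = |s - t|) →
        ∀ z w : X × ℝ, 0 < z.2 → 0 < w.2 →
          ∃ γ : ℝ → X × ℝ,
            ContinuousOn γ (Set.Icc 0 1) ∧ γ 0 = z ∧ γ 1 = w ∧
            (∀ t ∈ Set.Icc (0 : ℝ) 1, 0 < (γ t).2) ∧
            daLength γ ≤ ENNReal.ofReal (C * da z w) ∧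
            ∀ t ∈ Set.Icc (0 : ℝ) 1,
              c * min (da z (γ t)) (da (γ t) w) ≤ daDist (γ t) {p : X × ℝ | p.2 ≤ 0} := by
  refine ⟨1/4, 7, by norm_num, by norm_num, by norm_num, ?_⟩
  intro X _ hgeo z w hz hw
  obtain ⟨g, hg0, hg1, hgiso⟩ := hgeo z.1 w.1
  set ℓ : ℝ := dist z.1 w.1 with hℓdef
  set D : ℝ := da z w with hDdef
  set M : ℝ := max z.2 w.2 + D with hMdef
  have hℓnn : 0 ≤ ℓ := dist_nonneg
  have hDnn : 0 ≤ D := da_nonneg z w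
  have hℓD : ℓ ≤ D := da_fst_le z w
  have hsnd : |z.2 - w.2| ≤ D := da_snd_le z w
  have habs1 : z.2 - w.2 ≤ D := (le_abs_self _).trans hsnd
  have habs2 : w.2 - z.2 ≤ D := by
    have := (neg_abs_le (z.2 - w.2)); linarith
  have hMz : z.2 ≤ M := by
    have := le_max_left z.2 w.2; linarith
  have hMw : w.2 ≤ M := by
    have := le_max_right z.2 w.2; linarith
  have hMz2 : M - z.2 ≤ 2*D := by
    rcases le_total z.2 w.2 with h | h
    · rw [hMdef, max_eq_right h]; linarith
    · rw [hMdef, max_eq_left h]; linarith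
  have hMw2 : M - w.2 ≤ 2*D := by
    rcases le_total z.2 w.2 with h | h
    · rw [hMdef, max_eq_right h]; linarith
    · rw [hMdef, max_eq_left h]; linarith
  have hMpos : 0 < M := by
    have := le_max_left z.2 w.2; linarith
  have hDM : D ≤ M := by
    have := lt_of_lt_of_le hz (le_max_left z.2 w.2); linarith
  set γ : ℝ → X × ℝ := fun t =>
    if t ≤ 1/3 then (z.1, z.2 + 3*t*(M - z.2))
    else if t ≤ 2/3 then (g ((3*t - 1)*ℓ), M)
    else (w.1, M - (3*t - 2)*(M - w.2)) with hγdef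
  have hγ0 : γ 0 = z := by
    simp only [hγdef]
    norm_num
  have hγ1 : γ 1 = w := by
    simp only [hγdef]
    norm_num
  have hseg1 : ∀ s ∈ Set.Icc (0:ℝ) (1/3), γ s = (z.1, z.2 + 3*s*(M - z.2)) := by
    intro s hs
    simp only [hγdef, if_pos hs.2]
  have hseg2 : ∀ s ∈ Set.Icc (1/3 : ℝ) (2/3), γ s = (g ((3*s - 1)*ℓ), M) := by
    intro s hs
    by_cases h : s ≤ 1/3
    · have hs13 : s = 1/3 := le_antisymm h hs.1
      subst hs13
      simp only [hγdef, if_pos le_rfl]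
      norm_num [hg0]
    · simp only [hγdef, if_neg h, if_pos hs.2]
  have hseg3 : ∀ s ∈ Set.Icc (2/3 : ℝ) 1, γ s = (w.1, M - (3*s - 2)*(M - w.2)) := by
    intro s hs
    by_cases h : s ≤ 1/3
    · exfalso; linarith [hs.1]
    · by_cases h2 : s ≤ 2/3
      · have hs23 : s = 2/3 := le_antisymm h2 hs.1
        subst hs23
        simp only [hγdef, if_neg h, if_pos le_rfl]
        norm_num [hg1]
      · simp only [hγdef, if_neg h, if_neg h2]
  -- segment Lipschitz bounds
  have hL1 : ∀ s ∈ Set.Icc (0:ℝ) (1/3), ∀ t ∈ Set.Icc (0:ℝ) (1/3), s ≤ t →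
      da (γ s) (γ t) ≤ 6*D*(t - s) := by
    intro s hs t ht hst
    rw [hseg1 s hs, hseg1 t ht, da_vert]
    rw [show z.2 + 3*s*(M - z.2) - (z.2 + 3*t*(M - z.2)) = -(3*(t-s)*(M - z.2)) by ring,
      abs_neg, abs_of_nonneg (by nlinarith)]
    nlinarith
  have hL2 : ∀ s ∈ Set.Icc (1/3:ℝ) (2/3), ∀ t ∈ Set.Icc (1/3:ℝ) (2/3), s ≤ t →
      da (γ s) (γ t) ≤ 6*D*(t - s) := by
    intro s hs t ht hst
    rw [hseg2 s hs, hseg2 t ht, da_horiz]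
    have hu : (3*s - 1)*ℓ ∈ Set.Icc (0:ℝ) ℓ :=
      ⟨by nlinarith [hs.1], by nlinarith [hs.2]⟩
    have hv : (3*t - 1)*ℓ ∈ Set.Icc (0:ℝ) ℓ :=
      ⟨by nlinarith [ht.1], by nlinarith [ht.2]⟩
    rw [hgiso _ hu _ hv,
      show (3*s - 1)*ℓ - (3*t - 1)*ℓ = -(3*(t-s)*ℓ) by ring,
      abs_neg, abs_of_nonneg (by nlinarith)]
    nlinarith
  have hL3 : ∀ s ∈ Set.Icc (2/3:ℝ) 1, ∀ t ∈ Set.Icc (2/3:ℝ) 1, s ≤ t →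
      da (γ s) (γ t) ≤ 6*D*(t - s) := by
    intro s hs t ht hst
    rw [hseg3 s hs, hseg3 t ht, da_vert]
    rw [show M - (3*s - 2)*(M - w.2) - (M - (3*t - 2)*(M - w.2)) = 3*(t-s)*(M - w.2) by ring,
      abs_of_nonneg (by nlinarith)]
    nlinarith
  have hLip : ∀ s ∈ Set.Icc (0:ℝ) 1, ∀ t ∈ Set.Icc (0:ℝ) 1, s ≤ t →
      da (γ s) (γ t) ≤ 6*D*(t - s) := by
    intro s hs t ht hst
    rcases le_or_gt t (1/3) with h | h
    · exact hL1 s ⟨hs.1, hst.trans h⟩ t ⟨ht.1, h⟩ hst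
    · rcases le_or_gt t (2/3) with h2 | h2
      · rcases le_or_gt s (1/3) with h3 | h3
        · calc da (γ s) (γ t) ≤ da (γ s) (γ (1/3)) + da (γ (1/3)) (γ t) := da_triangle _ _ _
            _ ≤ 6*D*(1/3 - s) + 6*D*(t - 1/3) :=
                add_le_add (hL1 s ⟨hs.1, h3⟩ (1/3) (by norm_num) h3)
                  (hL2 (1/3) (by norm_num) t ⟨h.le, h2⟩ h.le)
            _ = 6*D*(t - s) := by ring
        · exact hL2 s ⟨h3.le, hst.trans h2⟩ t ⟨h.le, h2⟩ hst
      · rcases le_or_gt s (2/3) with h3 | h3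
        · rcases le_or_gt s (1/3) with h4 | h4
          · calc da (γ s) (γ t) ≤ da (γ s) (γ (2/3)) + da (γ (2/3)) (γ t) := da_triangle _ _ _
              _ ≤ (da (γ s) (γ (1/3)) + da (γ (1/3)) (γ (2/3))) + da (γ (2/3)) (γ t) := by
                  linarith [da_triangle (γ s) (γ (1/3)) (γ (2/3))]
              _ ≤ (6*D*(1/3 - s) + 6*D*(2/3 - 1/3)) + 6*D*(t - 2/3) :=
                  add_le_add (add_le_add
                    (hL1 s ⟨hs.1, h4⟩ (1/3) (by norm_num) h4)
                    (hL2 (1/3) (by norm_num) (2/3) (by norm_num) (by norm_num)))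
                    (hL3 (2/3) (by norm_num) t ⟨h2.le, ht.2⟩ h2.le)
              _ = 6*D*(t - s) := by ring
          · calc da (γ s) (γ t) ≤ da (γ s) (γ (2/3)) + da (γ (2/3)) (γ t) := da_triangle _ _ _
              _ ≤ 6*D*(2/3 - s) + 6*D*(t - 2/3) :=
                  add_le_add (hL2 s ⟨h4.le, h3⟩ (2/3) (by norm_num) h3)
                    (hL3 (2/3) (by norm_num) t ⟨h2.le, ht.2⟩ h2.le)
              _ = 6*D*(t - s) := by ring
        · exact hL3 s ⟨h3.le, hst.trans ht.2⟩ t ⟨(h3.trans_le hst).le, ht.2⟩ hst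
  have hpos : ∀ t ∈ Set.Icc (0:ℝ) 1, 0 < (γ t).2 := by
    intro t ht
    rcases le_or_gt t (1/3) with h | h
    · rw [hseg1 t ⟨ht.1, h⟩]
      have : 0 ≤ 3*t*(M - z.2) := by nlinarith [ht.1]
      simp only
      linarith
    · rcases le_or_gt t (2/3) with h2 | h2
      · rw [hseg2 t ⟨h.le, h2⟩]; exact hMpos
      · rw [hseg3 t ⟨h2.le, ht.2⟩]
        have h1 : (3*t - 2)*(M - w.2) ≤ 1*(M - w.2) :=
          mul_le_mul_of_nonneg_right (by linarith [ht.2]) (by linarith)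
        simp only
        linarith
  have hcont : ContinuousOn γ (Set.Icc 0 1) := by
    have hK : (0:ℝ) ≤ 6*D := by linarith
    apply LipschitzOnWith.continuousOn (K := Real.toNNReal (6*D))
    rw [lipschitzOnWith_iff_dist_le_mul]
    intro s hs t ht
    rw [Real.coe_toNNReal _ hK, Real.dist_eq]
    rcases le_total s t with h | h
    · refine (dist_le_da _ _).trans ?_
      rw [abs_of_nonpos (by linarith), ]
      have := hLip s hs t ht h
      linarith
    · rw [dist_comm]
      refine (dist_le_da _ _).trans ?_
      rw [abs_of_nonneg (by linarith)]
      have := hLip t ht s hs h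
      linarith
  refine ⟨γ, hcont, hγ0, hγ1, hpos, ?_, ?_⟩
  · refine (daLength_le_of_lip γ (6*D) hLip).trans (ENNReal.ofReal_le_ofReal ?_)
    linarith
  · intro t ht
    have hyt : 0 < (γ t).2 := hpos t ht
    have hdd : (γ t).2 ≤ daDist (γ t) {p : X × ℝ | p.2 ≤ 0} := daDist_lower (γ t) z.1
    have hmin : min (da z (γ t)) (da (γ t) w) ≤ 4 * (γ t).2 := by
      rcases le_or_gt t (1/3) with h | h
      · have e := hseg1 t ⟨ht.1, h⟩
        have hda : da z (γ t) = 3*t*(M - z.2) := by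
          rw [show z = (z.1, z.2) from rfl, e, da_vert]
          rw [show z.2 - (z.2 + 3*t*(M - z.2)) = -(3*t*(M - z.2)) by ring, abs_neg,
            abs_of_nonneg (by nlinarith [ht.1])]
        have hy : (γ t).2 = z.2 + 3*t*(M - z.2) := by rw [e]
        refine (min_le_left _ _).trans ?_
        rw [hda, hy]; linarith
      · rcases le_or_gt t (2/3) with h2 | h2
        · have hy : (γ t).2 = M := by rw [hseg2 t ⟨h.le, h2⟩]
          have hda : da z (γ t) ≤ 6*D*(t - 0) := by
            rw [← hγ0]; exact hLip 0 (by norm_num) t ht ht.1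
          refine (min_le_left _ _).trans ?_
          rw [hy]
          nlinarith
        · have e := hseg3 t ⟨h2.le, ht.2⟩
          have hda : da (γ t) w = (3 - 3*t)*(M - w.2) := by
            rw [show w = (w.1, w.2) from rfl, e, da_vert]
            rw [show M - (3*t - 2)*(M - w.2) - w.2 = (3 - 3*t)*(M - w.2) by ring,
              abs_of_nonneg (by nlinarith [ht.2])]
          have hy : (γ t).2 = M - (3*t - 2)*(M - w.2) := by rw [e]
          refine (min_le_right _ _).trans ?_
          rw [hda, hy]
          nlinarith [ht.2]
    linarith
end
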